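/- With the same setting, let $\theta \in L^\infty(\Omega)$ with $\theta(x) \leq \lambda_{n+1}$ a.e. and $\theta \not\equiv \lambda_{n+1}$. Then there exists $\hat c > 0$ such that for all $\hat u \in \hat H_n$: $\|\nabla \hat u\|_2^2 + \int_{\partial\Omega} \beta \hat u^2 \, d\sigma - \int_\Omega \theta \hat u^2 \, dx \geq \hat c \|\hat u\|^2$. -/

import Mathlib

open MeasureTheory Filter Topology
open RealInnerProductSpace

set_option maxHeartbeats 1600000 in
/-- same Robin setting as Statement 6 (`H` models `H¹(Ω)`,
`j : H → L²(Ω)` the compact inclusion, `a` the Robin form).  `Ĥₙ` is the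
orthogonal complement of the span of the first `n` Robin eigenspaces; the
variational characterization `λ_{n+1} ‖û‖₂² ≤ a(û,û)` holds on `Ĥₙ`, with
equality precisely on the eigenspace `E(λ_{n+1}) ⊆ Ĥₙ`, whose nonzero
elements satisfy unique continuation.  If `θ ∈ L^∞(Ω)`, `θ ≤ λ_{n+1}` a.e.
and `θ ≢ λ_{n+1}`, then there is `ĉ > 0` with
`a(û,û) - ∫_Ω θ û² dx ≥ ĉ ‖û‖²` for all `û ∈ Ĥₙ`. -/
theorem lemma_B_lower
    {Ω : Type*} [MeasurableSpace Ω] (μ : Measure Ω)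
    {H : Type*} [NormedAddCommGroup H] [InnerProductSpace ℝ H] [CompleteSpace H]
    (j : H →L[ℝ] Lp ℝ 2 μ)
    -- compactness of the embedding H¹(Ω) ↪ L²(Ω) :
    (hj_compact : ∀ u : ℕ → H, (∃ M, ∀ k, ‖u k‖ ≤ M) →
      ∃ φ : ℕ → ℕ, StrictMono φ ∧ ∃ w, Tendsto (fun k => j (u (φ k))) atTop (nhds w))
    (a : H →L[ℝ] H →L[ℝ] ℝ)
    -- H-norm control by the form (β ≥ 0) : ‖u‖² ≤ a(u,u) + ‖u‖₂² :
    (hnorm : ∀ u : H, ‖u‖ ^ 2 ≤ a u u + ‖j u‖ ^ 2)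
    (n : ℕ) (lam : ℝ)  -- λ_{n+1}
    (Hhat : Submodule ℝ H) (hHhat_closed : IsClosed (Hhat : Set H))
    (En1 : Submodule ℝ H) (hEsub : En1 ≤ Hhat)
    -- variational characterization of λ_{n+1} on Ĥₙ :
    (hmin : ∀ u ∈ Hhat, lam * ‖j u‖ ^ 2 ≤ a u u)
    -- the equality case consists exactly of the eigenfunctions of λ_{n+1} :
    (heq : ∀ u ∈ Hhat, a u u = lam * ‖j u‖ ^ 2 → u ∈ En1)
    -- unique continuation property on E(λ_{n+1}) :
    (hUC : ∀ u ∈ En1, u ≠ 0 → μ {x | (j u : Ω → ℝ) x = 0} = 0)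
    -- θ ∈ L^∞(Ω), θ ≤ λ_{n+1} a.e., θ ≢ λ_{n+1} :
    (θ : Ω → ℝ) (hθmeas : Measurable θ)
    (hθbd : ∃ M, ∀ᵐ x ∂μ, |θ x| ≤ M)
    (hθle : ∀ᵐ x ∂μ, θ x ≤ lam)
    (hθne : ¬ (θ =ᵐ[μ] fun _ => lam)) :
    ∃ chat > (0:ℝ), ∀ u ∈ Hhat,
      chat * ‖u‖ ^ 2 ≤ a u u - ∫ x, θ x * ((j u : Ω → ℝ) x) ^ 2 ∂μ := by
  classical
  obtain ⟨M₀, hM₀⟩ := hθbd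
  set M : ℝ := max M₀ 0 with hMdef
  have hM : ∀ᵐ x ∂μ, |θ x| ≤ M := hM₀.mono fun x hx => hx.trans (le_max_left _ _)
  have hM0 : (0:ℝ) ≤ M := le_max_right _ _
  -- basic L² facts
  have hnormsq : ∀ f : Lp ℝ 2 μ, ‖f‖ ^ 2 = ∫ x, (f x) ^ 2 ∂μ := by
    intro f
    rw [← real_inner_self_eq_norm_sq, L2.inner_def]
    simp_rw [RCLike.inner_apply, starRingEnd_apply, star_trivial, ← sq]
  have hsqint : ∀ f : Lp ℝ 2 μ, Integrable (fun x => (f x) ^ 2) μ := by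
    intro f
    have h := L2.integrable_inner (𝕜 := ℝ) f f
    simp_rw [RCLike.inner_apply, starRingEnd_apply, star_trivial, ← sq] at h
    exact h
  have hθint : ∀ f : Lp ℝ 2 μ, Integrable (fun x => θ x * (f x) ^ 2) μ := fun f =>
    (hsqint f).bdd_mul hθmeas.aestronglyMeasurable
      (hM.mono fun x hx => by simpa [Real.norm_eq_abs] using hx)
  have hθlam : ∀ f : Lp ℝ 2 μ, ∫ x, θ x * (f x) ^ 2 ∂μ ≤ lam * ‖f‖ ^ 2 := by
    intro f
    have h1 : ∫ x, θ x * (f x) ^ 2 ∂μ ≤ ∫ x, lam * (f x) ^ 2 ∂μ := by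
      refine integral_mono_ae (hθint f) ((hsqint f).const_mul lam) ?_
      filter_upwards [hθle] with x hx
      exact mul_le_mul_of_nonneg_right hx (sq_nonneg _)
    calc ∫ x, θ x * (f x) ^ 2 ∂μ ≤ ∫ x, lam * (f x) ^ 2 ∂μ := h1
      _ = lam * ‖f‖ ^ 2 := by rw [integral_const_mul, hnormsq]
  -- continuity estimate for f ↦ ∫ θ f²
  have hθcont : ∀ f g : Lp ℝ 2 μ,
      |(∫ x, θ x * (f x) ^ 2 ∂μ) - ∫ x, θ x * (g x) ^ 2 ∂μ| ≤
        M * ‖f - g‖ * (‖f‖ + ‖g‖) := by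
    intro f g
    set F : Lp ℝ 2 μ := |f - g| with hF
    set G : Lp ℝ 2 μ := |f + g| with hG
    have hFG : Integrable (fun x => F x * G x) μ := by
      have h := L2.integrable_inner (𝕜 := ℝ) F G
      simp_rw [RCLike.inner_apply', starRingEnd_apply, star_trivial] at h
      exact h
    have hbound : ∀ᵐ x ∂μ, ‖θ x * (f x) ^ 2 - θ x * (g x) ^ 2‖ ≤ M * (F x * G x) := by
      filter_upwards [hM, Lp.coeFn_sub f g, Lp.coeFn_add f g,
        Lp.coeFn_abs (f - g), Lp.coeFn_abs (f + g)] with x hx h1 h2 h3 h4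
      have hFx : F x = |f x - g x| := by rw [hF, h3, h1]; rfl
      have hGx : G x = |f x + g x| := by rw [hG, h4, h2]; rfl
      rw [Real.norm_eq_abs, hFx, hGx]
      calc |θ x * (f x) ^ 2 - θ x * (g x) ^ 2|
          = |θ x| * (|f x - g x| * |f x + g x|) := by
            rw [show θ x * (f x) ^ 2 - θ x * (g x) ^ 2
                = θ x * ((f x - g x) * (f x + g x)) by ring, abs_mul, abs_mul]
        _ ≤ M * (|f x - g x| * |f x + g x|) :=
            mul_le_mul_of_nonneg_right hx (by positivity)
    have h1 : ‖∫ x, θ x * (f x) ^ 2 - θ x * (g x) ^ 2 ∂μ‖ ≤ ∫ x, M * (F x * G x) ∂μ :=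
      norm_integral_le_of_norm_le (hFG.const_mul M) hbound
    rw [integral_sub (hθint f) (hθint g), Real.norm_eq_abs] at h1
    have h2 : ∫ x, M * (F x * G x) ∂μ = M * ⟪F, G⟫ := by
      rw [L2.inner_def (𝕜 := ℝ)]
      simp_rw [RCLike.inner_apply', starRingEnd_apply, star_trivial]
      rw [integral_const_mul]
    have h3 : ⟪F, G⟫ ≤ ‖f - g‖ * ‖f + g‖ := by
      have h := real_inner_le_norm F G
      rwa [hF, hG, norm_abs_eq_norm, norm_abs_eq_norm] at h
    have h4 : ‖f + g‖ ≤ ‖f‖ + ‖g‖ := norm_add_le f g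
    have h5 : (0:ℝ) ≤ ‖f - g‖ := norm_nonneg _
    have h6 : M * ⟪F, G⟫ ≤ M * (‖f - g‖ * ‖f + g‖) := mul_le_mul_of_nonneg_left h3 hM0
    have h7 : M * (‖f - g‖ * ‖f + g‖) ≤ M * (‖f - g‖ * (‖f‖ + ‖g‖)) :=
      mul_le_mul_of_nonneg_left (mul_le_mul_of_nonneg_left h4 h5) hM0
    linarith [h1, h2, h6, h7]
  -- the quantity Q is nonnegative on Hhat
  have hQnn : ∀ u ∈ Hhat, 0 ≤ a u u - ∫ x, θ x * ((j u : Ω → ℝ) x) ^ 2 ∂μ := by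
    intro u hu
    have h1 := hθlam (j u)
    have h2 := hmin u hu
    linarith
  by_contra hcon
  push_neg at hcon
  -- normalized almost-minimizing sequence
  have hseq : ∀ k : ℕ, ∃ u : H, u ∈ Hhat ∧ ‖u‖ = 1 ∧
      a u u - ∫ x, θ x * ((j u : Ω → ℝ) x) ^ 2 ∂μ < 1 / (k + 1) := by
    intro k
    obtain ⟨u, hu, hlt⟩ := hcon (1 / (k + 1)) (by positivity)
    have hpos : 0 < (1 / (k + 1 : ℝ)) * ‖u‖ ^ 2 := lt_of_le_of_lt (hQnn u hu) hlt
    have hu0 : ‖u‖ ≠ 0 := by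
      intro h; rw [h] at hpos; simp at hpos
    set c : ℝ := ‖u‖⁻¹ with hc
    have hc0 : c ≠ 0 := inv_ne_zero hu0
    refine ⟨c • u, Hhat.smul_mem c hu, ?_, ?_⟩
    · rw [norm_smul, hc, norm_inv, norm_norm]
      field_simp
    · have hja : a (c • u) (c • u) = c ^ 2 * a u u := by
        simp [_root_.map_smul, smul_eq_mul]; ring
      have hji : ∫ x, θ x * ((j (c • u) : Ω → ℝ) x) ^ 2 ∂μ
          = c ^ 2 * ∫ x, θ x * ((j u : Ω → ℝ) x) ^ 2 ∂μ := by
        rw [_root_.map_smul j c u]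
        rw [show ∫ x, θ x * (((c • j u : Lp ℝ 2 μ)) x) ^ 2 ∂μ
            = ∫ x, c ^ 2 * (θ x * ((j u : Ω → ℝ) x) ^ 2) ∂μ from
          integral_congr_ae (by
            filter_upwards [Lp.coeFn_smul c (j u)] with x hx
            rw [hx]; simp [smul_eq_mul]; ring)]
        rw [integral_const_mul]
      have hc2 : c ^ 2 * ‖u‖ ^ 2 = 1 := by
        rw [hc]; field_simp
      have hc2pos : 0 < c ^ 2 := by positivity
      calc a (c • u) (c • u) - ∫ x, θ x * ((j (c • u) : Ω → ℝ) x) ^ 2 ∂μ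
          = c ^ 2 * (a u u - ∫ x, θ x * ((j u : Ω → ℝ) x) ^ 2 ∂μ) := by
            rw [hja, hji]; ring
        _ < c ^ 2 * ((1 / (k + 1)) * ‖u‖ ^ 2) := by
            exact mul_lt_mul_of_pos_left hlt hc2pos
        _ = 1 / (k + 1) := by rw [show c ^ 2 * ((1 / ((k:ℝ) + 1)) * ‖u‖ ^ 2)
              = (1 / ((k:ℝ) + 1)) * (c ^ 2 * ‖u‖ ^ 2) by ring, hc2, mul_one]
  choose v hvH hvn hvQ using hseq
  obtain ⟨φ, hφ, w, hw⟩ := hj_compact v ⟨1, fun k => le_of_eq (hvn k)⟩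
  set V : ℕ → H := fun k => v (φ k) with hV
  set T : Lp ℝ 2 μ → ℝ := fun f => ∫ x, θ x * (f x) ^ 2 ∂μ with hT
  set ε : ℕ → ℝ := fun k => 1 / (φ k + 1 : ℝ) with hε
  have hε0 : Tendsto ε atTop (𝓝 0) := by
    have h1 : ∀ k : ℕ, 0 ≤ ε k := fun k => by positivity
    have h2 : ∀ k : ℕ, ε k ≤ 1 / (k + 1 : ℝ) := by
      intro k
      rw [hε]
      apply one_div_le_one_div_of_le (by positivity)
      have : (k:ℝ) ≤ (φ k : ℝ) := by exact_mod_cast hφ.le_apply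
      linarith
    exact tendsto_of_tendsto_of_tendsto_of_le_of_le tendsto_const_nhds
      tendsto_one_div_add_atTop_nhds_zero_nat h1 h2
  -- convergence of the θ-integrals
  have hjVw : Tendsto (fun k => j (V k)) atTop (𝓝 w) := hw
  have hjVnorm : Tendsto (fun k => ‖j (V k)‖) atTop (𝓝 ‖w‖) := hjVw.norm
  have hjVsub : Tendsto (fun k => ‖j (V k) - w‖) atTop (𝓝 0) := by
    have h := (hjVw.sub (tendsto_const_nhds (x := w))).norm
    simpa using h
  have hTconv : Tendsto (fun k => T (j (V k))) atTop (𝓝 (T w)) := by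
    rw [tendsto_iff_dist_tendsto_zero]
    simp only [Real.dist_eq]
    have hb : Tendsto (fun k => M * ‖j (V k) - w‖ * (‖j (V k)‖ + ‖w‖)) atTop
        (𝓝 (M * 0 * (‖w‖ + ‖w‖))) :=
      ((tendsto_const_nhds.mul hjVsub).mul (hjVnorm.add tendsto_const_nhds))
    rw [mul_zero, zero_mul] at hb
    exact squeeze_zero (fun k => abs_nonneg _) (fun k => hθcont (j (V k)) w) hb
  -- squeeze for a (V k) (V k)
  have haup : ∀ k, a (V k) (V k) ≤ ε k + T (j (V k)) := by
    intro k
    have h := hvQ (φ k)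
    simp only [hT, hε, hV]
    linarith
  have halow : ∀ k, lam * ‖j (V k)‖ ^ 2 ≤ a (V k) (V k) := fun k => hmin _ (hvH (φ k))
  have hTw : T w = lam * ‖w‖ ^ 2 := by
    have h1 : lam * ‖w‖ ^ 2 ≤ 0 + T w := by
      refine le_of_tendsto_of_tendsto'
        (f := fun k => lam * ‖j (V k)‖ ^ 2) (g := fun k => ε k + T (j (V k)))
        ((tendsto_const_nhds.mul (hjVnorm.pow 2))) (hε0.add hTconv)
        (fun k => (halow k).trans (haup k))
    have h2 := hθlam w
    simp only [hT]
    linarith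
  have haconv : Tendsto (fun k => a (V k) (V k)) atTop (𝓝 (lam * ‖w‖ ^ 2)) := by
    refine tendsto_of_tendsto_of_tendsto_of_le_of_le
      (tendsto_const_nhds.mul (hjVnorm.pow 2)) ?_ halow haup
    have := hε0.add hTconv
    rw [zero_add, hTw] at this
    exact this
  -- the sequence V is Cauchy
  have hsconv : Tendsto (fun k => a (V k) (V k) + ‖j (V k)‖ ^ 2) atTop
      (𝓝 (lam * ‖w‖ ^ 2 + ‖w‖ ^ 2)) := haconv.add (hjVnorm.pow 2)
  have hkey0 : ∀ x, x ∈ Hhat → ∀ y, y ∈ Hhat → ‖x - y‖ ^ 2 ≤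
      2 * (a x x + ‖j x‖ ^ 2) + 2 * (a y y + ‖j y‖ ^ 2) - (lam + 1) * ‖j x + j y‖ ^ 2 := by
    intro x hx y hy
    have h1 : ‖x - y‖ ^ 2 ≤ a (x - y) (x - y) + ‖j (x - y)‖ ^ 2 := hnorm _
    have e1 : a (x - y) (x - y) = a x x - a x y - a y x + a y y := by
      simp only [_root_.map_sub, ContinuousLinearMap.sub_apply]; ring
    have e2 : a (x + y) (x + y) = a x x + a x y + a y x + a y y := by
      simp only [_root_.map_add, ContinuousLinearMap.add_apply]; ring
    have hsub : j (x - y) = j x - j y := _root_.map_sub j x y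
    have h3 : ‖j (x - y)‖ ^ 2 = 2 * ‖j x‖ ^ 2 + 2 * ‖j y‖ ^ 2 - ‖j x + j y‖ ^ 2 := by
      have hp := parallelogram_law_with_norm ℝ (j x) (j y)
      rw [hsub]
      simp only [pow_two]
      linarith [hp]
    have h4 : lam * ‖j (x + y)‖ ^ 2 ≤ a (x + y) (x + y) := hmin _ (Hhat.add_mem hx hy)
    have h5 : j (x + y) = j x + j y := _root_.map_add j x y
    rw [h5] at h4
    linarith [h1, h4, e1, e2, h3]
  have hkey : ∀ k m : ℕ, dist (V k) (V m) ^ 2 ≤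
      2 * (a (V k) (V k) + ‖j (V k)‖ ^ 2) + 2 * (a (V m) (V m) + ‖j (V m)‖ ^ 2)
        - (lam + 1) * ‖j (V k) + j (V m)‖ ^ 2 := by
    intro k m
    rw [dist_eq_norm]
    exact hkey0 _ (hvH (φ k)) _ (hvH (φ m))
  have hDconv : Tendsto (fun p : ℕ × ℕ => dist (V p.1) (V p.2) ^ 2) atTop (𝓝 0) := by
    have hfst : Tendsto (Prod.fst : ℕ × ℕ → ℕ) atTop atTop := by
      rw [← prod_atTop_atTop_eq]; exact tendsto_fst
    have hsnd : Tendsto (Prod.snd : ℕ × ℕ → ℕ) atTop atTop := by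
      rw [← prod_atTop_atTop_eq]; exact tendsto_snd
    set L : ℝ := lam * ‖w‖ ^ 2 + ‖w‖ ^ 2 with hL
    have hF : Tendsto (fun p : ℕ × ℕ =>
        2 * (a (V p.1) (V p.1) + ‖j (V p.1)‖ ^ 2) + 2 * (a (V p.2) (V p.2) + ‖j (V p.2)‖ ^ 2)
          - (lam + 1) * ‖j (V p.1) + j (V p.2)‖ ^ 2) atTop
        (𝓝 (2 * L + 2 * L - (lam + 1) * ‖w + w‖ ^ 2)) := by
      refine Tendsto.sub (Tendsto.add ?_ ?_) ?_
      · exact tendsto_const_nhds.mul (hsconv.comp hfst)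
      · exact tendsto_const_nhds.mul (hsconv.comp hsnd)
      · exact tendsto_const_nhds.mul
          (((((hjVw.comp hfst).add (hjVw.comp hsnd))).norm).pow 2)
    have hww : ‖w + w‖ ^ 2 = 4 * ‖w‖ ^ 2 := by
      rw [show w + w = (2:ℝ) • w from (two_smul ℝ w).symm, norm_smul]
      simp [Real.norm_eq_abs]
      ring
    have hzero : 2 * L + 2 * L - (lam + 1) * ‖w + w‖ ^ 2 = 0 := by
      rw [hww, hL]; ring
    rw [hzero] at hF
    exact tendsto_of_tendsto_of_tendsto_of_le_of_le tendsto_const_nhds hF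
      (fun p => sq_nonneg _) (fun p => hkey p.1 p.2)
  have hcauchy : CauchySeq V := by
    rw [cauchySeq_iff_tendsto_dist_atTop_0]
    have h := (Real.continuous_sqrt.tendsto 0).comp hDconv
    rw [Real.sqrt_zero] at h
    refine h.congr fun p => ?_
    exact Real.sqrt_sq dist_nonneg
  obtain ⟨u, hVu⟩ := cauchySeq_tendsto_of_complete hcauchy
  have huH : u ∈ Hhat :=
    hHhat_closed.mem_of_tendsto hVu (Eventually.of_forall fun k => hvH (φ k))
  have hun : ‖u‖ = 1 := by
    refine tendsto_nhds_unique hVu.norm ?_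
    have : (fun k => ‖V k‖) = fun _ => (1:ℝ) := funext fun k => hvn (φ k)
    rw [this]
    exact tendsto_const_nhds
  have hju : j u = w :=
    tendsto_nhds_unique ((j.continuous.tendsto u).comp hVu) hjVw
  have hau : a u u = lam * ‖w‖ ^ 2 := by
    have hca : Continuous fun x : H => a x x :=
      a.continuous₂.comp (continuous_id.prodMk continuous_id)
    exact tendsto_nhds_unique ((hca.tendsto u).comp hVu) haconv
  have huE : u ∈ En1 := heq u huH (by rw [hau, hju])
  have hu0 : u ≠ 0 := by
    intro h; rw [h, norm_zero] at hun; exact one_ne_zero hun.symm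
  have hzset : μ {x | (j u : Ω → ℝ) x = 0} = 0 := hUC u huE hu0
  have hwne : ∀ᵐ x ∂μ, w x ≠ 0 := by
    rw [hju] at hzset
    rw [ae_iff]
    simpa using hzset
  -- ∫ (lam - θ) w² = 0 and conclusion
  have hint0 : ∫ x, (lam - θ x) * (w x) ^ 2 ∂μ = 0 := by
    have h1 : ∫ x, (lam - θ x) * (w x) ^ 2 ∂μ
        = lam * ‖w‖ ^ 2 - T w := by
      rw [hT]
      rw [show (fun x => (lam - θ x) * (w x) ^ 2)
          = fun x => lam * (w x) ^ 2 - θ x * (w x) ^ 2 from funext fun x => by ring]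
      rw [integral_sub ((hsqint w).const_mul lam) (hθint w), integral_const_mul, hnormsq]
    rw [h1, hTw]; ring
  have hae0 : ∀ᵐ x ∂μ, (lam - θ x) * (w x) ^ 2 = 0 := by
    have hnn : 0 ≤ᵐ[μ] fun x => (lam - θ x) * (w x) ^ 2 := by
      filter_upwards [hθle] with x hx
      exact mul_nonneg (by linarith) (sq_nonneg _)
    have hint : Integrable (fun x => (lam - θ x) * (w x) ^ 2) μ := by
      rw [show (fun x => (lam - θ x) * (w x) ^ 2)
          = fun x => lam * (w x) ^ 2 - θ x * (w x) ^ 2 from funext fun x => by ring]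
      exact ((hsqint w).const_mul lam).sub (hθint w)
    exact (integral_eq_zero_iff_of_nonneg_ae hnn hint).mp hint0
  apply hθne
  filter_upwards [hae0, hθle, hwne] with x h1 h2 h3
  rcases mul_eq_zero.mp h1 with h | h
  · linarith [sub_eq_zero.mp h]
  · exact absurd (pow_eq_zero_iff (n := 2) (by norm_num) |>.mp h) h3
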